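/- arXiv:1803.02655 — 2 statements merged into one kernel-verified Lean document; each statement's English description precedes it below -/
import Mathlib

section
/- Let H be a real separable Hilbert space, T > 0, and A : H → H a bounded linear operator. For any càdlàg function Z : [0,T] → H with Z(0) = 0, the function X(t) = Z(t) + ∫₀ᵗ A e^{(t−s)A} Z(s) ds is càdlàg, satisfies X(0) = 0, and solves the integral equation X(t) = A∫₀ᵗ X(s) ds + Z(t) for all t ∈ [0,T]. -/
open MeasureTheory Filter Set

/-- `f` is càdlàg on `[0, T]`: right-continuous on `[0, T)` and with left limits on `(0, T]`. -/
def Cadlag {H : Type*} [TopologicalSpace H] (T : ℝ) (f : ℝ → H) : Prop :=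
  (∀ t ∈ Set.Ico (0 : ℝ) T, Tendsto f (nhdsWithin t (Set.Ioi t)) (nhds (f t))) ∧
  (∀ t ∈ Set.Ioc (0 : ℝ) T, ∃ l, Tendsto f (nhdsWithin t (Set.Iio t)) (nhds l))

open scoped Topology
set_option synthInstance.maxHeartbeats 1000000
set_option maxHeartbeats 1000000

section Aux

variable {H : Type*} [NormedAddCommGroup H] [NormedSpace ℝ H] [SecondCountableTopology H]

lemma cadlag_indicator_stronglyMeasurable {T : ℝ} {Z : ℝ → H} (hZ : Cadlag T Z) :
    StronglyMeasurable ((Set.Ico (0:ℝ) T).indicator Z) := by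
  set f : ℕ → ℝ → H := fun n => (Set.Ico (0:ℝ) T).indicator
      (fun s => Z (((⌈s * (n+1)⌉ : ℤ) : ℝ) / (n+1))) with hf
  have hmeas : ∀ n, StronglyMeasurable (f n) := by
    intro n
    borelize H
    apply StronglyMeasurable.indicator _ measurableSet_Ico
    have h1 : Measurable fun s : ℝ => (⌈s * ((n:ℝ)+1)⌉ : ℤ) :=
      (measurable_id.mul_const _).ceil
    have h2 : Measurable fun k : ℤ => Z ((k : ℝ) / ((n:ℝ)+1)) :=
      measurable_from_top
    exact (h2.comp h1).stronglyMeasurable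
  apply stronglyMeasurable_of_tendsto atTop hmeas
  rw [tendsto_pi_nhds]
  intro s
  by_cases hs : s ∈ Set.Ico (0:ℝ) T
  · have hpos : ∀ n : ℕ, (0:ℝ) < (n:ℝ) + 1 := fun n => by positivity
    set a : ℕ → ℝ := fun n => ((⌈s * ((n:ℝ)+1)⌉ : ℤ) : ℝ) / ((n:ℝ)+1) with ha
    have hage : ∀ n, s ≤ a n := by
      intro n
      rw [ha, le_div_iff₀ (hpos n)]
      exact Int.le_ceil _
    have hale : ∀ n, a n ≤ s + 1 / ((n:ℝ)+1) := by
      intro n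
      rw [ha, div_le_iff₀ (hpos n)]
      have := (Int.ceil_lt_add_one (s * ((n:ℝ)+1))).le
      calc ((⌈s * ((n:ℝ)+1)⌉ : ℤ) : ℝ) ≤ s * ((n:ℝ)+1) + 1 := this
        _ = (s + 1 / ((n:ℝ)+1)) * ((n:ℝ)+1) := by field_simp
    have halim : Tendsto a atTop (𝓝 s) := by
      have hupper : Tendsto (fun n : ℕ => s + 1 / ((n:ℝ)+1)) atTop (𝓝 (s + 0)) :=
        tendsto_const_nhds.add tendsto_one_div_add_atTop_nhds_zero_nat
      rw [add_zero] at hupper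
      exact tendsto_of_tendsto_of_tendsto_of_le_of_le tendsto_const_nhds hupper hage hale
    have hcont : ContinuousWithinAt Z (Set.Ici s) s :=
      continuousWithinAt_Ioi_iff_Ici.1 (hZ.1 s hs)
    have hZa : Tendsto (fun n => Z (a n)) atTop (𝓝 (Z s)) :=
      hcont.tendsto.comp
        (tendsto_nhdsWithin_of_tendsto_nhds_of_eventually_within a halim
          (Eventually.of_forall hage))
    simpa [hf, Set.indicator_of_mem hs] using hZa
  · simp [hf, Set.indicator_of_notMem hs]

lemma cadlag_integrableOn {T : ℝ} {Z : ℝ → H} (hZ : Cadlag T Z) :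
    IntegrableOn Z (Set.Icc (0:ℝ) T) := by
  have hmeas := cadlag_indicator_stronglyMeasurable hZ
  have haes : AEStronglyMeasurable Z (volume.restrict (Set.Icc (0:ℝ) T)) := by
    refine ⟨(Set.Ico (0:ℝ) T).indicator Z, hmeas, ?_⟩
    have hne : ∀ᵐ x : ℝ ∂(volume.restrict (Set.Icc (0:ℝ) T)), x ≠ T := by
      refine ae_restrict_of_ae ?_
      rw [ae_iff]
      simpa [Classical.not_not, Set.setOf_eq_eq_singleton] using
        (measure_singleton (α := ℝ) (μ := volume) T)
    filter_upwards [ae_restrict_mem measurableSet_Icc, hne] with x hx hxT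
    have hmem : x ∈ Set.Ico (0:ℝ) T := ⟨hx.1, lt_of_le_of_ne hx.2 hxT⟩
    exact (Set.indicator_of_mem hmem Z).symm
  have hloc : LocallyIntegrableOn Z (Set.Icc (0:ℝ) T) volume := by
    intro x hx
    -- bound near x within Icc
    have hright : ∃ C, ∀ᶠ y in 𝓝[Set.Icc (0:ℝ) T ∩ Set.Ioi x] x, ‖Z y‖ ≤ C := by
      rcases eq_or_lt_of_le hx.2 with rfl | hlt
      · refine ⟨0, ?_⟩
        have hempty : Set.Icc (0:ℝ) x ∩ Set.Ioi x = ∅ := by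
          ext y; simp only [Set.mem_inter_iff, Set.mem_Icc, Set.mem_Ioi, Set.mem_empty_iff_false,
            iff_false, not_and]
          intro h; linarith [h.2]
        simp [hempty]
      · have h := hZ.1 x ⟨hx.1, hlt⟩
        have h2 := Metric.tendsto_nhds.mp h 1 one_pos
        refine ⟨‖Z x‖ + 1, ?_⟩
        refine Eventually.filter_mono (nhdsWithin_mono x Set.inter_subset_right) ?_
        filter_upwards [h2] with y hy
        have : ‖Z y - Z x‖ < 1 := by rwa [dist_eq_norm] at hy
        have h3 := norm_sub_norm_le (Z y) (Z x)
        linarith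
    have hleft : ∃ C, ∀ᶠ y in 𝓝[Set.Icc (0:ℝ) T ∩ Set.Iio x] x, ‖Z y‖ ≤ C := by
      rcases eq_or_lt_of_le hx.1 with rfl | hlt
      · refine ⟨0, ?_⟩
        have hempty : Set.Icc (0:ℝ) T ∩ Set.Iio (0:ℝ) = ∅ := by
          ext y; simp only [Set.mem_inter_iff, Set.mem_Icc, Set.mem_Iio, Set.mem_empty_iff_false,
            iff_false, not_and]
          intro h; linarith [h.1]
        simp [hempty]
      · obtain ⟨l, h⟩ := hZ.2 x ⟨hlt, hx.2⟩
        have h2 := Metric.tendsto_nhds.mp h 1 one_pos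
        refine ⟨‖l‖ + 1, ?_⟩
        refine Eventually.filter_mono (nhdsWithin_mono x Set.inter_subset_right) ?_
        filter_upwards [h2] with y hy
        have : ‖Z y - l‖ < 1 := by rwa [dist_eq_norm] at hy
        have h3 := norm_sub_norm_le (Z y) l
        linarith
    obtain ⟨C₁, hC₁⟩ := hright
    obtain ⟨C₂, hC₂⟩ := hleft
    set C : ℝ := max (max C₁ C₂) ‖Z x‖ with hC
    have hev : ∀ᶠ y in 𝓝[Set.Icc (0:ℝ) T] x, ‖Z y‖ ≤ C := by
      have hdecomp : 𝓝[Set.Icc (0:ℝ) T] x ≤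
          (𝓝[Set.Icc (0:ℝ) T ∩ Set.Iio x] x ⊔ 𝓝[{x}] x) ⊔
            𝓝[Set.Icc (0:ℝ) T ∩ Set.Ioi x] x := by
        rw [← nhdsWithin_union, ← nhdsWithin_union]
        apply nhdsWithin_mono
        intro y hy
        rcases lt_trichotomy y x with h | h | h
        · exact Or.inl (Or.inl ⟨hy, h⟩)
        · exact Or.inl (Or.inr h)
        · exact Or.inr ⟨hy, h⟩
      refine Eventually.filter_mono hdecomp ?_
      rw [eventually_sup, eventually_sup]
      refine ⟨⟨?_, ?_⟩, ?_⟩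
      · exact hC₂.mono fun y hy => hy.trans ((le_max_right C₁ C₂).trans (le_max_left _ _))
      · rw [nhdsWithin_singleton, eventually_pure]
        exact le_max_right _ _
      · exact hC₁.mono fun y hy => hy.trans ((le_max_left C₁ C₂).trans (le_max_left _ _))
    rw [eventually_iff, mem_nhdsWithin] at hev
    obtain ⟨U, hUopen, hxU, hU⟩ := hev
    refine ⟨U ∩ Set.Icc (0:ℝ) T,
      inter_mem (mem_nhdsWithin_of_mem_nhds (hUopen.mem_nhds hxU)) self_mem_nhdsWithin, ?_⟩
    constructor
    · refine haes.mono_measure ?_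
      exact Measure.restrict_mono Set.inter_subset_right le_rfl
    · refine HasFiniteIntegral.restrict_of_bounded (C := C) ?_ ?_
      · exact lt_of_le_of_lt (measure_mono Set.inter_subset_right) measure_Icc_lt_top
      · exact (ae_restrict_iff' (hUopen.measurableSet.inter measurableSet_Icc)).2
          (ae_of_all _ fun y hy => hU hy)
  exact hloc.integrableOn_isCompact isCompact_Icc

end Aux

theorem duhamel_formula_solves_ou
    {H : Type*} [NormedAddCommGroup H] [InnerProductSpace ℝ H] [CompleteSpace H]
    [SecondCountableTopology H]
    (T : ℝ) (hT : 0 < T) (A : H →L[ℝ] H)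
    (Z : ℝ → H) (hZ : Cadlag T Z) (hZ0 : Z 0 = 0)
    (X : ℝ → H)
    (hXdef : ∀ t, X t = Z t +
      ∫ s in (0 : ℝ)..t, (A.comp (NormedSpace.exp ((t - s) • A))) (Z s)) :
    Cadlag T X ∧ X 0 = 0 ∧
      ∀ t ∈ Set.Icc (0 : ℝ) T, X t = A (∫ s in (0 : ℝ)..t, X s) + Z t := by
  have hZT : IntegrableOn Z (Set.Icc (0:ℝ) T) := cadlag_integrableOn hZ
  have haesZ : AEStronglyMeasurable Z (volume.restrict (Set.Icc (0:ℝ) T)) :=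
    hZT.aestronglyMeasurable
  letI : NormedAlgebra ℚ (H →L[ℝ] H) := NormedAlgebra.restrictScalars ℚ ℝ (H →L[ℝ] H)
  set g : ℝ → H := fun s => (NormedSpace.exp ((-s) • A)) (Z s) with hgdef
  have hexpcont : Continuous fun t : ℝ => NormedSpace.exp (t • A) :=
    NormedSpace.exp_continuous.comp (continuous_id.smul continuous_const)
  have hexpnegcont : Continuous fun s : ℝ => NormedSpace.exp ((-s) • A) :=
    NormedSpace.exp_continuous.comp (continuous_id.neg.smul continuous_const)
  have happly : Continuous fun p : (H →L[ℝ] H) × H => p.1 p.2 :=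
    isBoundedBilinearMap_apply.continuous
  have hgmeas : AEStronglyMeasurable g (volume.restrict (Set.Icc (0:ℝ) T)) :=
    happly.comp_aestronglyMeasurable
      ((hexpnegcont.aestronglyMeasurable).prodMk haesZ)
  have hgint : IntegrableOn g (Set.Icc (0:ℝ) T) := by
    obtain ⟨C, hC⟩ := isCompact_Icc.exists_bound_of_continuousOn hexpnegcont.continuousOn
    refine Integrable.mono (hZT.norm.const_mul C) hgmeas ?_
    filter_upwards [ae_restrict_mem measurableSet_Icc] with s hs
    calc ‖g s‖ ≤ ‖NormedSpace.exp ((-s) • A)‖ * ‖Z s‖ :=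
          (NormedSpace.exp ((-s) • A)).le_opNorm (Z s)
      _ ≤ C * ‖Z s‖ := mul_le_mul_of_nonneg_right (hC s hs) (norm_nonneg _)
      _ ≤ ‖C * ‖Z s‖‖ := le_abs_self _
  have hgii : ∀ t ∈ Set.Icc (0:ℝ) T, IntervalIntegrable g volume 0 t := by
    intro t ht
    have : IntegrableOn g (Set.uIcc (0:ℝ) t) := by
      rw [Set.uIcc_of_le ht.1]
      exact hgint.mono_set (Set.Icc_subset_Icc le_rfl ht.2)
    exact this.intervalIntegrable
  have hZii : ∀ t ∈ Set.Icc (0:ℝ) T, IntervalIntegrable Z volume 0 t := by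
    intro t ht
    have : IntegrableOn Z (Set.uIcc (0:ℝ) t) := by
      rw [Set.uIcc_of_le ht.1]
      exact hZT.mono_set (Set.Icc_subset_Icc le_rfl ht.2)
    exact this.intervalIntegrable
  set G : ℝ → H := fun t => ∫ s in (0:ℝ)..t, g s with hGdef
  have hGcont : ContinuousOn G (Set.Icc (0:ℝ) T) := by
    have h := intervalIntegral.continuousOn_primitive_interval (μ := volume) (a := 0) (b := T)
      (f := g) (by rw [Set.uIcc_of_le hT.le]; exact hgint)
    rwa [Set.uIcc_of_le hT.le] at h
  set Y : ℝ → H := fun t => (A.comp (NormedSpace.exp (t • A))) (G t) with hYdef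
  have hYcont : ContinuousOn Y (Set.Icc (0:ℝ) T) := by
    have h2 : Continuous fun t : ℝ => A.comp (NormedSpace.exp (t • A)) :=
      ((ContinuousLinearMap.compL ℝ H H H A).continuous).comp hexpcont
    exact happly.comp_continuousOn (h2.continuousOn.prodMk hGcont)
  have hXeq : ∀ t ∈ Set.Icc (0:ℝ) T, X t = Z t + Y t := by
    intro t ht
    rw [hXdef t]
    congr 1
    have hpt : ∀ s : ℝ, (A.comp (NormedSpace.exp ((t - s) • A))) (Z s)
        = (A.comp (NormedSpace.exp (t • A))) (g s) := by
      intro s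
      have hcomm : Commute (t • A) ((-s) • A) :=
        ((Commute.refl A).smul_left t).smul_right (-s)
      have hsmul : (t - s) • A = t • A + (-s) • A := by
        rw [neg_smul, ← sub_eq_add_neg, ← sub_smul]
      rw [hsmul, NormedSpace.exp_add_of_commute hcomm]
      simp [hgdef, ContinuousLinearMap.comp_apply, ContinuousLinearMap.mul_apply]
    simp_rw [hpt]
    exact (A.comp (NormedSpace.exp (t • A))).intervalIntegral_comp_comm (hgii t ht)
  refine ⟨⟨?_, ?_⟩, ?_, ?_⟩
  · -- right continuity
    intro t ht
    have hev : ∀ᶠ y in 𝓝[Set.Ioi t] t, X y = Z y + Y y := by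
      filter_upwards [Ioo_mem_nhdsGT_of_mem (Set.left_mem_Ico.2 ht.2)] with y hy
      exact hXeq y ⟨ht.1.trans hy.1.le, hy.2.le⟩
    have hYright : Tendsto Y (𝓝[Set.Ioi t] t) (𝓝 (Y t)) := by
      rw [← nhdsWithin_Ioo_eq_nhdsGT ht.2]
      exact ((hYcont t ⟨ht.1, ht.2.le⟩).mono
        (fun y hy => ⟨ht.1.trans hy.1.le, hy.2.le⟩)).tendsto
    rw [hXeq t ⟨ht.1, ht.2.le⟩]
    exact Tendsto.congr' (by filter_upwards [hev] with y hy using hy.symm)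
      ((hZ.1 t ht).add hYright)
  · -- left limits
    intro t ht
    obtain ⟨l, hl⟩ := hZ.2 t ht
    refine ⟨l + Y t, ?_⟩
    have hev : ∀ᶠ y in 𝓝[Set.Iio t] t, X y = Z y + Y y := by
      filter_upwards [Ioo_mem_nhdsLT_of_mem (Set.right_mem_Ioc.2 ht.1)] with y hy
      exact hXeq y ⟨hy.1.le, hy.2.le.trans ht.2⟩
    have hYleft : Tendsto Y (𝓝[Set.Iio t] t) (𝓝 (Y t)) := by
      rw [← nhdsWithin_Ioo_eq_nhdsLT ht.1]
      exact ((hYcont t ⟨ht.1.le, ht.2⟩).mono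
        (fun y hy => ⟨hy.1.le, hy.2.le.trans ht.2⟩)).tendsto
    exact Tendsto.congr' (by filter_upwards [hev] with y hy using hy.symm)
      (hl.add hYleft)
  · -- X 0 = 0
    rw [hXdef 0, hZ0, intervalIntegral.integral_same, add_zero]
  · -- integral equation
    intro t ht
    set φ : ℝ → H := fun u => (NormedSpace.exp (u • A)) (G u) with hφdef
    have hφcont : ContinuousOn φ (Set.Icc (0:ℝ) t) :=
      happly.comp_continuousOn ((hexpcont.continuousOn).prodMk
        (hGcont.mono (Set.Icc_subset_Icc le_rfl ht.2)))
    have hderiv : ∀ u ∈ Set.Ioo (0:ℝ) t, HasDerivWithinAt φ (Y u + Z u) (Set.Ioi u) u := by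
      intro u hu
      have hu' : u ∈ Set.Icc (0:ℝ) T := ⟨hu.1.le, hu.2.le.trans ht.2⟩
      have huT : u < T := lt_of_lt_of_le hu.2 ht.2
      have hG : HasDerivWithinAt G (g u) (Set.Ioi u) u := by
        have hmeasf : StronglyMeasurableAtFilter g (𝓝[Set.Ioi u] u) volume := by
          refine ⟨Set.Ioo u T, Ioo_mem_nhdsGT_of_mem (Set.left_mem_Ico.2 huT), ?_⟩
          refine hgmeas.mono_measure ?_
          have hsub2 : Set.Ioo u T ⊆ Set.Icc (0:ℝ) T :=
            fun y hy => ⟨hu.1.le.trans hy.1.le, hy.2.le⟩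
          exact Measure.restrict_mono hsub2 le_rfl
        have hbz : ContinuousWithinAt Z (Set.Ioi u) u := hZ.1 u ⟨hu.1.le, huT⟩
        have hb : ContinuousWithinAt g (Set.Ioi u) u :=
          happly.continuousAt.comp_continuousWithinAt
            ((hexpnegcont.continuousWithinAt).prodMk hbz)
        exact (intervalIntegral.integral_hasDerivWithinAt_right (hgii u hu') hmeasf hb).mono
          Set.Ioi_subset_Ici_self
      have hE : HasDerivWithinAt (fun v : ℝ => NormedSpace.exp (v • A))
          (A * NormedSpace.exp (u • A)) (Set.Ioi u) u :=
        (hasDerivAt_exp_smul_const' (𝕂 := ℝ) A u).hasDerivWithinAt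
      have hφ' := hE.clm_apply hG
      have heq : (A * NormedSpace.exp (u • A)) (G u) + (NormedSpace.exp (u • A)) (g u)
          = Y u + Z u := by
        have h1 : (A * NormedSpace.exp (u • A)) (G u) = Y u := by
          simp [hYdef, ContinuousLinearMap.mul_apply, ContinuousLinearMap.comp_apply]
        have hcomm : Commute (u • A) ((-u) • A) :=
          ((Commute.refl A).smul_left u).smul_right (-u)
        have h2 : (NormedSpace.exp (u • A)) (g u) = Z u := by
          have : NormedSpace.exp (u • A) * NormedSpace.exp ((-u) • A) = 1 := by
            rw [← NormedSpace.exp_add_of_commute hcomm]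
            have : u • A + (-u) • A = (0:ℝ) • A := by
              rw [← add_smul]; ring_nf
            rw [this, zero_smul, NormedSpace.exp_zero]
          calc (NormedSpace.exp (u • A)) (g u)
              = (NormedSpace.exp (u • A) * NormedSpace.exp ((-u) • A)) (Z u) := by
                simp [hgdef, ContinuousLinearMap.mul_apply]
            _ = Z u := by rw [this]; simp
        rw [h1, h2]
      rw [← heq]
      exact hφ'
    have hii : IntervalIntegrable (fun u => Y u + Z u) volume 0 t := by
      refine IntervalIntegrable.add ?_ (hZii t ht)
      apply ContinuousOn.intervalIntegrable
      rw [Set.uIcc_of_le ht.1]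
      exact hYcont.mono (Set.Icc_subset_Icc le_rfl ht.2)
    have hFTC := intervalIntegral.integral_eq_sub_of_hasDeriv_right_of_le ht.1 hφcont hderiv hii
    have hφ0 : φ 0 = 0 := by
      simp [hφdef, hGdef, intervalIntegral.integral_same]
    have hXint : ∫ u in (0:ℝ)..t, X u = φ t := by
      have hcongr : ∫ u in (0:ℝ)..t, X u = ∫ u in (0:ℝ)..t, (Y u + Z u) := by
        apply intervalIntegral.integral_congr
        intro u hu
        rw [Set.uIcc_of_le ht.1] at hu
        rw [hXeq u ⟨hu.1, hu.2.trans ht.2⟩, add_comm]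
      rw [hcongr, hFTC, hφ0, sub_zero]
    rw [hXeq t ht, hXint]
    have : A (φ t) = Y t := by
      simp [hφdef, hYdef, ContinuousLinearMap.comp_apply]
    rw [this, add_comm]
end

section
/- Let H be a real separable Hilbert space, T > 0, and D_{H,T} the space of H-valued càdlàg functions on [0,T] with the cylindrical σ-algebra. For a Borel set E ⊆ H bounded below and t ∈ [0,T], the map f ↦ π_t(E, f), counting the number of s ∈ (0, t] with Δf(s) = f(s) − f(s−) ∈ E, is a measurable map from D_{H,T} to ℕ. -/
open MeasureTheory Filter Set Function

/-- The space of `H`-valued càdlàg functions on `[0, T]`. -/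
def CadlagSpace (H : Type*) [TopologicalSpace H] (T : ℝ) : Type _ :=
  {f : ℝ → H // Cadlag T f}

/-- The cylindrical σ-algebra on `CadlagSpace H T`: the smallest σ-algebra making all
point evaluations `f ↦ f t`, `t ∈ [0, T]`, measurable. -/
def cylSigma (H : Type*) [TopologicalSpace H] [MeasurableSpace H] (T : ℝ) :
    MeasurableSpace (CadlagSpace H T) :=
  ⨆ t ∈ Set.Icc (0 : ℝ) T, MeasurableSpace.comap (fun f => f.1 t) inferInstance

/-- `π_t(E, f)`: the number of jumps of `f` in `E` up to time `t`. -/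
noncomputable def jumpCount {H : Type*} [NormedAddCommGroup H] (E : Set H)
    (f : ℝ → H) (t : ℝ) : ℕ :=
  {s ∈ Set.Ioc (0 : ℝ) t | f s - Function.leftLim f s ∈ E}.ncard

open Topology

namespace JumpProof

variable {H : Type*} [NormedAddCommGroup H] {T t : ℝ} {f : ℝ → H}

lemma tendsto_leftLim (hf : Cadlag T f) {s : ℝ} (hs : s ∈ Set.Ioc 0 T) :
    Tendsto f (𝓝[<] s) (𝓝 (leftLim f s)) := by
  obtain ⟨l, hl⟩ := hf.2 s hs
  have hne : 𝓝[<] s ≠ ⊥ := (inferInstance : (𝓝[<] s).NeBot).ne'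
  rwa [leftLim_eq_of_tendsto hl]

lemma tendsto_rightIci (hf : Cadlag T f) {s : ℝ} (hs : s ∈ Set.Ico 0 T) :
    Tendsto f (𝓝[≥] s) (𝓝 (f s)) := by
  have h : (Set.Ici s) = {s} ∪ Set.Ioi s := by
    ext x; simp [Set.mem_Ici, le_iff_lt_or_eq, or_comm, eq_comm]
  rw [h, nhdsWithin_union, nhdsWithin_singleton, tendsto_sup]
  exact ⟨tendsto_pure_nhds f s, hf.1 s hs⟩

lemma finite_bigJumps (hf : Cadlag T f) (ht : t ∈ Set.Icc 0 T) {δ : ℝ} (hδ : 0 < δ) :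
    {s ∈ Set.Ioc (0:ℝ) t | δ ≤ ‖f s - leftLim f s‖}.Finite := by
  by_contra hinf
  rw [← Set.not_infinite, not_not] at hinf
  set B := {s ∈ Set.Ioc (0:ℝ) t | δ ≤ ‖f s - leftLim f s‖} with hB
  have hsub : B ⊆ Set.Icc 0 t := fun s hs => ⟨hs.1.1.le, hs.1.2⟩
  obtain ⟨x, hxK, hacc⟩ := hinf.exists_accPt_of_subset_isCompact isCompact_Icc hsub
  have hfreq : (∃ᶠ y in 𝓝[<] x, y ∈ B) ∨ (∃ᶠ y in 𝓝[>] x, y ∈ B) := by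
    have : ∃ᶠ y in 𝓝[≠] x, y ∈ B := by
      rw [frequently_iff_neBot]
      exact hacc
    rw [← nhdsLT_sup_nhdsGT, frequently_sup] at this
    exact this
  rcases hfreq with hfreq | hfreq
  · -- accumulation from the left
    obtain ⟨y0, hy0B, hy0lt⟩ := (hfreq.and_eventually self_mem_nhdsWithin).exists
    have hx0 : 0 < x := lt_trans hy0B.1.1 hy0lt
    have hxT : x ∈ Set.Ioc (0:ℝ) T := ⟨hx0, hxK.2.trans ht.2⟩
    have hL := tendsto_leftLim hf hxT
    set L := leftLim f x with hLdef
    have hev : ∀ᶠ u in 𝓝[<] x, ‖f u - L‖ < δ / 3 := by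
      have := hL (Metric.ball_mem_nhds L (show (0:ℝ) < δ/3 by positivity))
      filter_upwards [this] with u hu
      simpa [dist_eq_norm] using hu
    obtain ⟨a, ha, haE⟩ := mem_nhdsLT_iff_exists_Ioo_subset.1 hev
    obtain ⟨s, hsB, hsmem⟩ := (hfreq.and_eventually (Ioo_mem_nhdsLT_of_mem ⟨ha, le_refl x⟩)).exists
    have hsT : s ∈ Set.Ioc (0:ℝ) T := ⟨hsB.1.1, hsB.1.2.trans ht.2⟩
    have hLs := tendsto_leftLim hf hsT
    have h1 : ‖leftLim f s - L‖ ≤ δ / 3 := by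
      have htd : Tendsto (fun u => ‖f u - L‖) (𝓝[<] s) (𝓝 ‖leftLim f s - L‖) :=
        ((hLs.sub tendsto_const_nhds).norm)
      refine le_of_tendsto htd ?_
      filter_upwards [Ioo_mem_nhdsLT_of_mem ⟨hsmem.1, le_refl s⟩] with u hu
      exact (haE ⟨hu.1, hu.2.trans hsmem.2⟩).le
    have h2 : ‖f s - L‖ < δ / 3 := haE hsmem
    have : ‖f s - leftLim f s‖ < δ := by
      calc ‖f s - leftLim f s‖ ≤ ‖f s - L‖ + ‖leftLim f s - L‖ := by
            rw [← norm_neg (leftLim f s - L)]; simpa using norm_add_le (f s - L) (L - leftLim f s)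
        _ < δ := by linarith
    exact absurd hsB.2 (not_le.2 this)
  · -- accumulation from the right
    obtain ⟨y0, hy0B, hy0gt⟩ := (hfreq.and_eventually self_mem_nhdsWithin).exists
    have hxt : x < t := lt_of_lt_of_le hy0gt hy0B.1.2
    have hxT : x ∈ Set.Ico (0:ℝ) T := ⟨hxK.1, lt_of_lt_of_le hxt ht.2⟩
    have hR := hf.1 x hxT
    have hev : ∀ᶠ u in 𝓝[>] x, ‖f u - f x‖ < δ / 3 := by
      have := hR (Metric.ball_mem_nhds (f x) (show (0:ℝ) < δ/3 by positivity))
      filter_upwards [this] with u hu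
      simpa [dist_eq_norm] using hu
    obtain ⟨b, hb, hbE⟩ := mem_nhdsGT_iff_exists_Ioo_subset.1 hev
    obtain ⟨s, hsB, hsmem⟩ := (hfreq.and_eventually (Ioo_mem_nhdsGT_of_mem ⟨le_refl x, hb⟩)).exists
    have hsT : s ∈ Set.Ioc (0:ℝ) T := ⟨hsB.1.1, hsB.1.2.trans ht.2⟩
    have hLs := tendsto_leftLim hf hsT
    have h1 : ‖leftLim f s - f x‖ ≤ δ / 3 := by
      have htd : Tendsto (fun u => ‖f u - f x‖) (𝓝[<] s) (𝓝 ‖leftLim f s - f x‖) :=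
        ((hLs.sub tendsto_const_nhds).norm)
      refine le_of_tendsto htd ?_
      filter_upwards [Ioo_mem_nhdsLT_of_mem ⟨hsmem.1, le_refl s⟩] with u hu
      exact (hbE ⟨hu.1, hu.2.trans hsmem.2⟩).le
    have h2 : ‖f s - f x‖ < δ / 3 := hbE hsmem
    have : ‖f s - leftLim f s‖ < δ := by
      calc ‖f s - leftLim f s‖ ≤ ‖f s - f x‖ + ‖leftLim f s - f x‖ := by
            rw [← norm_neg (leftLim f s - f x)]; simpa using norm_add_le (f s - f x) (f x - leftLim f s)
        _ < δ := by linarith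
    exact absurd hsB.2 (not_le.2 this)


section Meas

variable [MeasurableSpace H]

lemma measurable_eval {s : ℝ} (hs : s ∈ Set.Icc 0 T) :
    @Measurable (CadlagSpace H T) H (cylSigma H T) _ (fun f => f.1 s) := by
  intro A hA
  have h : MeasurableSpace.comap (fun f : CadlagSpace H T => f.1 s) inferInstance
      ≤ cylSigma H T :=
    le_iSup₂ (f := fun (u : ℝ) (_ : u ∈ Set.Icc (0:ℝ) T) =>
      MeasurableSpace.comap (fun f : CadlagSpace H T => f.1 u) inferInstance) s hs
  exact h _ ⟨A, hA, rfl⟩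

lemma measurable_incr [BorelSpace H] [SecondCountableTopology H]
    {p q : ℝ} (hp : p ∈ Set.Icc 0 T) (hq : q ∈ Set.Icc 0 T) :
    @Measurable (CadlagSpace H T) H (cylSigma H T) _ (fun f => f.1 q - f.1 p) :=
  Measurable.sub (measurable_eval hq) (measurable_eval hp)

end Meas

/-- countable index set of admissible partition points -/
def Dset (t : ℝ) : Set ℝ := Set.range ((↑) : ℚ → ℝ) ∪ {t}

lemma countable_Dset (t : ℝ) : (Dset t).Countable :=
  (Set.countable_range _).union (Set.countable_singleton t)

lemma rat_mem_Dset (t : ℝ) (q : ℚ) : (q : ℝ) ∈ Dset t := Or.inl ⟨q, rfl⟩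

lemma t_mem_Dset (t : ℝ) : t ∈ Dset t := Or.inr rfl

/-- admissible tuples of pairs -/
def Adm (t : ℝ) (k : ℕ) (m : ℕ) (pq : (Fin m → ℝ) × (Fin m → ℝ)) : Prop :=
  (∀ i, pq.1 i ∈ Dset t ∧ pq.2 i ∈ Dset t ∧ 0 ≤ pq.1 i ∧ pq.1 i < pq.2 i ∧ pq.2 i ≤ t
      ∧ pq.2 i - pq.1 i < 1/(k+1)) ∧ ∀ i j : Fin m, i < j → pq.2 i ≤ pq.1 j

lemma countable_Adm (t : ℝ) (k m : ℕ) : {pq | Adm t k m pq}.Countable := by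
  have h1 : {pq | Adm t k m pq} ⊆
      (Set.univ.pi fun _ : Fin m => Dset t) ×ˢ (Set.univ.pi fun _ : Fin m => Dset t) := by
    rintro ⟨p, q⟩ h
    exact ⟨fun i _ => (h.1 i).1, fun i _ => (h.1 i).2.1⟩
  refine Set.Countable.mono (h1.trans ?_)
    ((Set.countable_pi (fun _ : Fin m => countable_Dset t)).prod
      (Set.countable_pi (fun _ : Fin m => countable_Dset t)))
  intro x hx
  exact ⟨fun i => hx.1 i trivial, fun i => hx.2 i trivial⟩

/-- approximating events -/
def Rset (H : Type*) [NormedAddCommGroup H] (T t : ℝ) (U : Set H) (m : ℕ) :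
    Set (CadlagSpace H T) :=
  ⋂ k : ℕ, ⋃ pq ∈ {pq | Adm t k m pq},
    {f : CadlagSpace H T | ∀ i : Fin m, f.1 (pq.2 i) - f.1 (pq.1 i) ∈ U}

lemma measurable_Rset [MeasurableSpace H] [BorelSpace H] [SecondCountableTopology H]
    (ht : t ∈ Set.Icc 0 T) {U : Set H} (hU : MeasurableSet U) (m : ℕ) :
    MeasurableSet[cylSigma H T] (Rset H T t U m) := by
  apply MeasurableSet.iInter; intro k
  apply MeasurableSet.biUnion (countable_Adm t k m)
  rintro ⟨p, q⟩ hpq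
  have heq : {f : CadlagSpace H T | ∀ i : Fin m, f.1 (q i) - f.1 (p i) ∈ U}
      = ⋂ i : Fin m, (fun f : CadlagSpace H T => f.1 (q i) - f.1 (p i)) ⁻¹' U := by
    ext f; simp [Set.mem_iInter]
  rw [heq]
  apply MeasurableSet.iInter; intro i
  obtain ⟨h1, h2⟩ := hpq
  obtain ⟨-, -, hp0, hplt, hqt, -⟩ := h1 i
  exact measurable_incr ⟨hp0, (hplt.le.trans hqt).trans ht.2⟩
    ⟨hp0.trans hplt.le, hqt.trans ht.2⟩ hU


lemma mem_Rset {U : Set H} (hUopen : IsOpen U) (ht : t ∈ Set.Icc 0 T)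
    (F : CadlagSpace H T) {m : ℕ}
    (hJfin : {s ∈ Set.Ioc (0:ℝ) t | F.1 s - leftLim F.1 s ∈ U}.Finite)
    (hm : m ≤ {s ∈ Set.Ioc (0:ℝ) t | F.1 s - leftLim F.1 s ∈ U}.ncard) :
    F ∈ Rset H T t U m := by
  classical
  obtain ⟨f, hf⟩ := F
  simp only at hJfin hm ⊢
  obtain ⟨J', hJ'sub, hJ'card⟩ := Set.exists_subset_card_eq hm
  have hJ'fin : J'.Finite := hJfin.subset hJ'sub
  have hcard : hJ'fin.toFinset.card = m := by
    rw [← hJ'card]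
    exact (Set.ncard_eq_toFinset_card J' hJ'fin).symm
  set Fs := hJ'fin.toFinset with hFs
  let e := Fs.orderIsoOfFin hcard
  set s : Fin m → ℝ := fun i => (e i : ℝ) with hsdef
  have smono : StrictMono s := fun i j hij => e.strictMono hij
  have hsJ : ∀ i, s i ∈ {u ∈ Set.Ioc (0:ℝ) t | f u - leftLim f u ∈ U} := by
    intro i
    exact hJ'sub (hJ'fin.mem_toFinset.1 (e i).2)
  have hs0 : ∀ i, 0 < s i := fun i => (hsJ i).1.1
  have hst : ∀ i, s i ≤ t := fun i => (hsJ i).1.2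
  have hsU : ∀ i, f (s i) - leftLim f (s i) ∈ U := fun i => (hsJ i).2
  -- radii for open balls inside U
  choose ε hε0 hball using fun i => Metric.isOpen_iff.1 hUopen _ (hsU i)
  rw [Rset]; refine Set.mem_iInter.2 ?_
  intro k
  -- a gap bound
  have hgapE : ∃ g > (0:ℝ), ∀ i j : Fin m, i < j → g ≤ s j - s i := by
    rcases (Finset.univ.filter (fun ij : Fin m × Fin m => ij.1 < ij.2)).eq_empty_or_nonempty
      with he | hne
    · refine ⟨1, one_pos, fun i j hij => absurd ?_ (Finset.notMem_empty ((i, j)))⟩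
      rw [← he]; simp [hij]
    · obtain ⟨ij0, hij0mem, hmin⟩ :=
        Finset.exists_min_image _ (fun ij : Fin m × Fin m => s ij.2 - s ij.1) hne
      have h0 : (0:ℝ) < s ij0.2 - s ij0.1 := by
        have := smono (Finset.mem_filter.1 hij0mem).2
        linarith
      exact ⟨s ij0.2 - s ij0.1, h0, fun i j hij => hmin (i, j) (by simp [hij])⟩
  obtain ⟨g, hg0, hgap⟩ := hgapE
  set r : ℝ := min (1/(2*(k+1 : ℝ))) (g/2) with hrdef
  have hr0 : 0 < r := lt_min (by positivity) (by positivity)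
  have hrk : 2*r ≤ 1/(k+1 : ℝ) := by
    have h1 : r ≤ 1/(2*(k+1:ℝ)) := min_le_left _ _
    have h2 : 1/(2*(k+1:ℝ)) = (1/(k+1:ℝ))/2 := by
      field_simp
    linarith
  have hrgap : ∀ i j : Fin m, i < j → 2*r ≤ s j - s i := by
    intro i j hij
    have h1 : r ≤ g/2 := min_le_right _ _
    have := hgap i j hij
    linarith
  -- choose the left points p i
  have hpex : ∀ i : Fin m, ∃ p : ℝ, p ∈ Dset t ∧ s i - r < p ∧ 0 < p ∧ p < s i ∧
      ‖f p - leftLim f (s i)‖ < ε i / 2 := by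
    intro i
    have hsT : s i ∈ Set.Ioc (0:ℝ) T := ⟨hs0 i, (hst i).trans ht.2⟩
    have hev : ∀ᶠ u in 𝓝[<] (s i), ‖f u - leftLim f (s i)‖ < ε i / 2 := by
      have := (tendsto_leftLim hf hsT)
        (Metric.ball_mem_nhds (leftLim f (s i)) (show (0:ℝ) < ε i / 2 by have := hε0 i; positivity))
      filter_upwards [this] with u hu
      simpa [dist_eq_norm] using hu
    obtain ⟨a, ha, haE⟩ := mem_nhdsLT_iff_exists_Ioo_subset.1 hev
    have ha' : a < s i := ha
    set M := max a (max (s i - r) (s i / 2)) with hM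
    have hA : a ≤ M := le_max_left _ _
    have hB : s i - r ≤ M := (le_max_left _ _).trans (le_max_right _ _)
    have hC : s i / 2 ≤ M := (le_max_right _ _).trans (le_max_right _ _)
    have hlt : M < s i := by
      rw [hM, max_lt_iff, max_lt_iff]
      exact ⟨ha', by linarith [hr0], by linarith [hs0 i]⟩
    obtain ⟨qq, hq1, hq2⟩ := exists_rat_btwn hlt
    refine ⟨(qq : ℝ), rat_mem_Dset t qq, by linarith, by linarith [hs0 i], hq2, ?_⟩
    exact haE ⟨by linarith, hq2⟩
  -- choose the right points q i
  have hqex : ∀ i : Fin m, ∃ q : ℝ, q ∈ Dset t ∧ s i ≤ q ∧ q < s i + r ∧ q ≤ t ∧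
      ‖f q - f (s i)‖ < ε i / 2 := by
    intro i
    rcases eq_or_lt_of_le (hst i) with heq | hlt
    · refine ⟨t, t_mem_Dset t, heq.le, by linarith [hr0], le_refl t, ?_⟩
      rw [heq]
      simpa using (by have := hε0 i; positivity : (0:ℝ) < ε i / 2)
    · have hsT : s i ∈ Set.Ico (0:ℝ) T := ⟨(hs0 i).le, hlt.trans_le ht.2⟩
      have hev : ∀ᶠ u in 𝓝[>] (s i), ‖f u - f (s i)‖ < ε i / 2 := by
        have := (hf.1 (s i) hsT)
          (Metric.ball_mem_nhds (f (s i)) (show (0:ℝ) < ε i / 2 by have := hε0 i; positivity))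
        filter_upwards [this] with u hu
        simpa [dist_eq_norm] using hu
      obtain ⟨b, hb, hbE⟩ := mem_nhdsGT_iff_exists_Ioo_subset.1 hev
      have hb' : s i < b := hb
      set M := min b (min t (s i + r)) with hM
      have hA : M ≤ b := min_le_left _ _
      have hB : M ≤ t := (min_le_right _ _).trans (min_le_left _ _)
      have hC : M ≤ s i + r := (min_le_right _ _).trans (min_le_right _ _)
      have hlt2 : s i < M := by
        rw [hM, lt_min_iff, lt_min_iff]
        exact ⟨hb', hlt, by linarith [hr0]⟩
      obtain ⟨qq, hq1, hq2⟩ := exists_rat_btwn hlt2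
      refine ⟨(qq : ℝ), rat_mem_Dset t qq, hq1.le, by linarith, by linarith, ?_⟩
      exact hbE ⟨hq1, by linarith⟩
  choose p hpD hpr hp0 hps hpL using hpex
  choose q hqD hsq hqr hqt hqR using hqex
  refine Set.mem_iUnion₂.2 ?_
  refine ⟨(p, q), ⟨fun i => ⟨hpD i, hqD i, (hp0 i).le, (hps i).trans_le (hsq i), hqt i, ?_⟩,
    fun i j hij => ?_⟩, fun i => ?_⟩
  · have := hpr i; have := hqr i; simp only; linarith [hrk]
  · have h1 := hqr i
    have h2 := hpr j
    have h3 := hrgap i j hij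
    simp only; linarith
  · -- membership in U
    simp only
    apply hball i
    rw [Metric.mem_ball, dist_eq_norm]
    have hnorm : f (q i) - f (p i) - (f (s i) - leftLim f (s i))
        = (f (q i) - f (s i)) - (f (p i) - leftLim f (s i)) := by abel
    rw [hnorm]
    calc ‖(f (q i) - f (s i)) - (f (p i) - leftLim f (s i))‖
        ≤ ‖f (q i) - f (s i)‖ + ‖f (p i) - leftLim f (s i)‖ := norm_sub_le _ _
      _ < ε i := by linarith [hqR i, hpL i]


lemma key_straddle (hf : Cadlag T f) (ht : t ∈ Set.Icc 0 T) {a b : ℕ → ℝ} {sl : ℝ}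
    {δ : ℝ} {U : Set H}
    (hab : ∀ k, 0 ≤ a k ∧ a k < b k ∧ b k ≤ t)
    (hU : ∀ k, f (b k) - f (a k) ∈ U)
    (hδ : ∀ x ∈ U, δ ≤ ‖x‖) (hδ0 : 0 < δ)
    (hA : Tendsto a atTop (𝓝 sl)) (hB : Tendsto b atTop (𝓝 sl)) :
    sl ∈ Set.Ioc (0:ℝ) t ∧ f sl - leftLim f sl ∈ closure U ∧
      ∀ᶠ k in atTop, a k < sl ∧ sl ≤ b k := by
  have hnorm : ∀ k, δ ≤ ‖f (b k) - f (a k)‖ := fun k => hδ _ (hU k)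
  have hsl_t : sl ≤ t := le_of_tendsto hB (Eventually.of_forall fun k => (hab k).2.2)
  have hsl_0 : 0 ≤ sl := ge_of_tendsto hA (Eventually.of_forall fun k => (hab k).1)
  have claim1 : ¬ ∃ᶠ k in atTop, sl ≤ a k := by
    intro hfreq
    obtain ⟨φ, hφ, hφa⟩ := Filter.extraction_of_frequently_atTop hfreq
    have hslt : sl < t := lt_of_le_of_lt (hφa 0) (lt_of_lt_of_le (hab (φ 0)).2.1 (hab (φ 0)).2.2)
    have hIci := tendsto_rightIci hf (⟨hsl_0, hslt.trans_le ht.2⟩ : sl ∈ Set.Ico (0:ℝ) T)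
    have ta : Tendsto (fun n => a (φ n)) atTop (𝓝[≥] sl) :=
      tendsto_nhdsWithin_iff.2 ⟨hA.comp hφ.tendsto_atTop, Eventually.of_forall fun n => hφa n⟩
    have tb : Tendsto (fun n => b (φ n)) atTop (𝓝[≥] sl) :=
      tendsto_nhdsWithin_iff.2 ⟨hB.comp hφ.tendsto_atTop,
        Eventually.of_forall fun n => ((hφa n).trans (hab (φ n)).2.1.le)⟩
    have hzero : Tendsto (fun n => ‖f (b (φ n)) - f (a (φ n))‖) atTop (𝓝 0) := by
      have := ((hIci.comp tb).sub (hIci.comp ta)).norm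
      simpa using this
    have : δ ≤ (0:ℝ) := ge_of_tendsto hzero (Eventually.of_forall fun n => hnorm (φ n))
    linarith
  have claim2 : ¬ ∃ᶠ k in atTop, b k < sl := by
    intro hfreq
    obtain ⟨φ, hφ, hφb⟩ := Filter.extraction_of_frequently_atTop hfreq
    have hsl_pos : 0 < sl := lt_of_le_of_lt (le_trans (hab (φ 0)).1 (hab (φ 0)).2.1.le) (hφb 0)
    have hIio := tendsto_leftLim hf (⟨hsl_pos, hsl_t.trans ht.2⟩ : sl ∈ Set.Ioc (0:ℝ) T)
    have ta : Tendsto (fun n => a (φ n)) atTop (𝓝[<] sl) :=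
      tendsto_nhdsWithin_iff.2 ⟨hA.comp hφ.tendsto_atTop,
        Eventually.of_forall fun n => lt_trans (hab (φ n)).2.1 (hφb n)⟩
    have tb : Tendsto (fun n => b (φ n)) atTop (𝓝[<] sl) :=
      tendsto_nhdsWithin_iff.2 ⟨hB.comp hφ.tendsto_atTop, Eventually.of_forall fun n => hφb n⟩
    have hzero : Tendsto (fun n => ‖f (b (φ n)) - f (a (φ n))‖) atTop (𝓝 0) := by
      have := ((hIio.comp tb).sub (hIio.comp ta)).norm
      simpa using this
    have : δ ≤ (0:ℝ) := ge_of_tendsto hzero (Eventually.of_forall fun n => hnorm (φ n))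
    linarith
  have hev : ∀ᶠ k in atTop, a k < sl ∧ sl ≤ b k := by
    have h1 : ∀ᶠ k in atTop, ¬ sl ≤ a k := not_frequently.1 claim1
    have h2 : ∀ᶠ k in atTop, ¬ b k < sl := not_frequently.1 claim2
    filter_upwards [h1, h2] with k hk1 hk2
    exact ⟨not_le.1 hk1, not_lt.1 hk2⟩
  obtain ⟨k0, hk0⟩ := hev.exists
  have hsl_pos : 0 < sl := lt_of_le_of_lt (hab k0).1 hk0.1
  have hslIoc : sl ∈ Set.Ioc (0:ℝ) t := ⟨hsl_pos, hsl_t⟩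
  have hfa : Tendsto (fun k => f (a k)) atTop (𝓝 (leftLim f sl)) := by
    have ta : Tendsto a atTop (𝓝[<] sl) :=
      tendsto_nhdsWithin_iff.2 ⟨hA, hev.mono fun k hk => hk.1⟩
    exact (tendsto_leftLim hf ⟨hsl_pos, hsl_t.trans ht.2⟩).comp ta
  have hfb : Tendsto (fun k => f (b k)) atTop (𝓝 (f sl)) := by
    by_cases hslT : sl < T
    · have tb : Tendsto b atTop (𝓝[≥] sl) :=
        tendsto_nhdsWithin_iff.2 ⟨hB, hev.mono fun k hk => hk.2⟩
      exact (tendsto_rightIci hf ⟨hsl_0, hslT⟩).comp tb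
    · have hslT' : sl = T := le_antisymm (hsl_t.trans ht.2) (not_lt.1 hslT)
      have hbt : ∀ᶠ k in atTop, b k = sl := by
        filter_upwards [hev] with k hk
        have : b k ≤ t := (hab k).2.2
        have : b k ≤ sl := by rw [hslT']; exact le_trans this ht.2
        exact le_antisymm this hk.2
      refine Tendsto.congr' ?_ tendsto_const_nhds
      filter_upwards [hbt] with k hk
      rw [hk]
  have hclos : f sl - leftLim f sl ∈ closure U :=
    mem_closure_of_tendsto (hfb.sub hfa) (Eventually.of_forall hU)
  exact ⟨hslIoc, hclos, hev⟩

lemma Rset_subset {U : Set H} (ht : t ∈ Set.Icc 0 T) {δ : ℝ} (hδ0 : 0 < δ)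
    (hδ : ∀ x ∈ U, δ ≤ ‖x‖) {m : ℕ} (F : CadlagSpace H T) (hF : F ∈ Rset H T t U m) :
    ∃ s : Fin m → ℝ, StrictMono s ∧ ∀ i, s i ∈ Set.Ioc (0:ℝ) t ∧
      F.1 (s i) - leftLim F.1 (s i) ∈ closure U := by
  obtain ⟨f, hf⟩ := F
  simp only at hF ⊢
  rw [Rset] at hF; replace hF := Set.mem_iInter.1 hF
  have hF' : ∀ k : ℕ, ∃ pq : (Fin m → ℝ) × (Fin m → ℝ), Adm t k m pq ∧
      ∀ i : Fin m, f (pq.2 i) - f (pq.1 i) ∈ U := by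
    intro k
    obtain ⟨pq, hpq, hmem⟩ := Set.mem_iUnion₂.1 (hF k)
    exact ⟨pq, hpq, hmem⟩
  choose pq hadm hmem using hF'
  have hp0 : ∀ k i, 0 ≤ (pq k).1 i := fun k i => ((hadm k).1 i).2.2.1
  have hplt : ∀ k i, (pq k).1 i < (pq k).2 i := fun k i => ((hadm k).1 i).2.2.2.1
  have hqt : ∀ k i, (pq k).2 i ≤ t := fun k i => ((hadm k).1 i).2.2.2.2.1
  have hdiff : ∀ k i, (pq k).2 i - (pq k).1 i < 1/(k+1 : ℝ) :=
    fun k i => ((hadm k).1 i).2.2.2.2.2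
  have hord : ∀ k, ∀ i j : Fin m, i < j → (pq k).2 i ≤ (pq k).1 j := fun k => (hadm k).2
  set K : Set ((Fin m → ℝ) × (Fin m → ℝ)) :=
    (Set.univ.pi fun _ : Fin m => Set.Icc 0 t) ×ˢ (Set.univ.pi fun _ : Fin m => Set.Icc 0 t)
    with hK
  have hKc : IsCompact K :=
    (isCompact_univ_pi fun _ => isCompact_Icc).prod (isCompact_univ_pi fun _ => isCompact_Icc)
  have hmemK : ∀ k, pq k ∈ K := by
    intro k
    refine ⟨fun i _ => ⟨hp0 k i, ((hplt k i).le.trans (hqt k i))⟩,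
      fun i _ => ⟨(hp0 k i).trans (hplt k i).le, hqt k i⟩⟩
  obtain ⟨lim, hlimK, φ, hφ, hconv⟩ := hKc.tendsto_subseq hmemK
  have hconvp : ∀ i, Tendsto (fun k => (pq (φ k)).1 i) atTop (𝓝 (lim.1 i)) := by
    intro i
    have h1 : Tendsto (fun k => (pq (φ k)).1) atTop (𝓝 lim.1) :=
      (continuous_fst.tendsto lim).comp hconv
    exact tendsto_pi_nhds.1 h1 i
  have hconvq' : ∀ i, Tendsto (fun k => (pq (φ k)).2 i) atTop (𝓝 (lim.2 i)) := by
    intro i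
    have h1 : Tendsto (fun k => (pq (φ k)).2) atTop (𝓝 lim.2) :=
      (continuous_snd.tendsto lim).comp hconv
    exact tendsto_pi_nhds.1 h1 i
  have hlim_eq : ∀ i, lim.2 i = lim.1 i := by
    intro i
    have hz : Tendsto (fun k => (pq (φ k)).2 i - (pq (φ k)).1 i) atTop (𝓝 0) := by
      apply squeeze_zero (fun k => by linarith [hplt (φ k) i])
        (fun k => (hdiff (φ k) i).le)
      have h0 : Tendsto (fun n : ℕ => 1 / ((n:ℝ) + 1)) atTop (𝓝 0) :=
        tendsto_one_div_add_atTop_nhds_zero_nat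
      exact h0.comp hφ.tendsto_atTop
    have h2 : Tendsto (fun k => (pq (φ k)).2 i - (pq (φ k)).1 i) atTop
        (𝓝 (lim.2 i - lim.1 i)) := (hconvq' i).sub (hconvp i)
    have := tendsto_nhds_unique h2 hz
    linarith
  have hconvq : ∀ i, Tendsto (fun k => (pq (φ k)).2 i) atTop (𝓝 (lim.1 i)) := by
    intro i; rw [← hlim_eq i]; exact hconvq' i
  set sl : Fin m → ℝ := fun i => lim.1 i with hsl
  have hkey : ∀ i : Fin m, sl i ∈ Set.Ioc (0:ℝ) t ∧
      f (sl i) - leftLim f (sl i) ∈ closure U ∧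
      ∀ᶠ k in atTop, (pq (φ k)).1 i < sl i ∧ sl i ≤ (pq (φ k)).2 i := by
    intro i
    exact key_straddle hf ht
      (fun k => ⟨hp0 (φ k) i, hplt (φ k) i, hqt (φ k) i⟩)
      (fun k => hmem (φ k) i) hδ hδ0 (hconvp i) (hconvq i)
  refine ⟨sl, ?_, fun i => ⟨(hkey i).1, (hkey i).2.1⟩⟩
  intro i j hij
  obtain ⟨k, hki, hkj⟩ := (((hkey i).2.2).and ((hkey j).2.2)).exists
  calc sl i ≤ (pq (φ k)).2 i := hki.2
    _ ≤ (pq (φ k)).1 j := hord (φ k) i j hij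
    _ < sl j := hkj.1


section Count

variable [MeasurableSpace H] [BorelSpace H] [SecondCountableTopology H]

lemma measurableSet_le_jumpCount_open (ht : t ∈ Set.Icc 0 T) {A : Set H} (hAopen : IsOpen A)
    {δ : ℝ} (hδ0 : 0 < δ) (hδ : ∀ x ∈ A, δ ≤ ‖x‖) (m : ℕ) :
    MeasurableSet[cylSigma H T]
      {F : CadlagSpace H T | m ≤ {s ∈ Set.Ioc (0:ℝ) t | F.1 s - leftLim F.1 s ∈ A}.ncard} := by
  classical
  have hAc : Aᶜ.Nonempty := by
    refine ⟨0, fun h0 => ?_⟩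
    have := hδ 0 h0
    rw [norm_zero] at this
    linarith
  set Aj : ℕ → Set H := fun j => {x | 1/(j+1:ℝ) < Metric.infDist x Aᶜ} with hAj
  have hj0 : ∀ j : ℕ, (0:ℝ) < 1/(j+1:ℝ) := fun j => by positivity
  have hAjA : ∀ j, Aj j ⊆ A := by
    intro j x hx
    by_contra hxA
    have : Metric.infDist x Aᶜ = 0 := Metric.infDist_zero_of_mem hxA
    rw [hAj] at hx
    simp only [Set.mem_setOf_eq, this] at hx
    linarith [hj0 j]
  have hAjopen : ∀ j, IsOpen (Aj j) :=
    fun j => isOpen_lt continuous_const (Metric.continuous_infDist_pt _)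
  have hclos : ∀ j, closure (Aj j) ⊆ A := by
    intro j x hx
    have h1 : closure (Aj j) ⊆ {x | 1/(j+1:ℝ) ≤ Metric.infDist x Aᶜ} :=
      closure_minimal (fun y hy => show 1/(j+1:ℝ) ≤ Metric.infDist y Aᶜ from le_of_lt hy) (isClosed_le continuous_const
        (Metric.continuous_infDist_pt _))
    have h2 := h1 hx
    by_contra hxA
    have : Metric.infDist x Aᶜ = 0 := Metric.infDist_zero_of_mem hxA
    rw [Set.mem_setOf_eq, this] at h2
    linarith [hj0 j]
  have hEq : {F : CadlagSpace H T | m ≤ {s ∈ Set.Ioc (0:ℝ) t | F.1 s - leftLim F.1 s ∈ A}.ncard}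
      = ⋃ j : ℕ, Rset H T t (Aj j) m := by
    ext F
    constructor
    · intro hFm
      simp only [Set.mem_setOf_eq] at hFm
      set J := {s ∈ Set.Ioc (0:ℝ) t | F.1 s - leftLim F.1 s ∈ A} with hJ
      have hJfin : J.Finite := by
        refine (finite_bigJumps F.2 ht hδ0).subset ?_
        intro s hs
        exact ⟨hs.1, hδ _ hs.2⟩
      have hfinj : ∀ j, {s ∈ Set.Ioc (0:ℝ) t | F.1 s - leftLim F.1 s ∈ Aj j}.Finite := by
        intro j
        refine hJfin.subset ?_
        intro s hs
        exact ⟨hs.1, hAjA j hs.2⟩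
      rcases Nat.eq_zero_or_pos m with hm0 | hm0
      · subst hm0
        exact Set.mem_iUnion.2 ⟨0, mem_Rset (hAjopen 0) ht F (hfinj 0) (Nat.zero_le _)⟩
      · have hJne : J.Nonempty := by
          rw [← Set.ncard_pos hJfin]
          exact lt_of_lt_of_le hm0 hFm
        obtain ⟨s0, hs0mem, hminv⟩ := Finset.exists_min_image hJfin.toFinset
          (fun s => Metric.infDist (F.1 s - leftLim F.1 s) Aᶜ) (by
            rwa [Set.Finite.toFinset_nonempty])
        set d := Metric.infDist (F.1 s0 - leftLim F.1 s0) Aᶜ with hd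
        have hd0 : 0 < d := by
          have hs0J : s0 ∈ J := hJfin.mem_toFinset.1 hs0mem
          obtain ⟨r, hr0, hball⟩ := Metric.isOpen_iff.1 hAopen _ hs0J.2
          by_contra hcon
          push_neg at hcon
          have hlt : d < r := lt_of_le_of_lt hcon hr0
          obtain ⟨y, hyAc, hylt⟩ := (Metric.infDist_lt_iff hAc).1 hlt
          exact hyAc (hball (Metric.mem_ball'.2 hylt))
        obtain ⟨j, hjlt⟩ := exists_nat_one_div_lt hd0
        have hsub : J ⊆ {s ∈ Set.Ioc (0:ℝ) t | F.1 s - leftLim F.1 s ∈ Aj j} := by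
          intro s hs
          refine ⟨hs.1, ?_⟩
          have := hminv s (hJfin.mem_toFinset.2 hs)
          exact lt_of_lt_of_le hjlt this
        refine Set.mem_iUnion.2 ⟨j, mem_Rset (hAjopen j) ht F (hfinj j) ?_⟩
        exact le_trans hFm (Set.ncard_le_ncard hsub (hfinj j))
    · intro hF
      obtain ⟨j, hFj⟩ := Set.mem_iUnion.1 hF
      have hδj : ∀ x ∈ Aj j, δ ≤ ‖x‖ := fun x hx => hδ x (hAjA j hx)
      obtain ⟨sl, hslmono, hslprops⟩ := Rset_subset ht hδ0 hδj F hFj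
      simp only [Set.mem_setOf_eq]
      have hJfin : {s ∈ Set.Ioc (0:ℝ) t | F.1 s - leftLim F.1 s ∈ A}.Finite := by
        refine (finite_bigJumps F.2 ht hδ0).subset ?_
        intro s hs
        exact ⟨hs.1, hδ _ hs.2⟩
      have hrange : Set.range sl ⊆ {s ∈ Set.Ioc (0:ℝ) t | F.1 s - leftLim F.1 s ∈ A} := by
        rintro x ⟨i, rfl⟩
        exact ⟨(hslprops i).1, hclos j (hslprops i).2⟩
      have hcard : (Set.range sl).ncard = m := by
        have h1 : Set.range sl = ↑(Finset.univ.image sl) := by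
          simp [Finset.coe_image]
        rw [h1, Set.ncard_coe_finset, Finset.card_image_of_injective _ hslmono.injective,
          Finset.card_univ, Fintype.card_fin]
      calc m = (Set.range sl).ncard := hcard.symm
        _ ≤ _ := Set.ncard_le_ncard hrange hJfin
  rw [hEq]
  exact MeasurableSet.iUnion fun j => measurable_Rset ht (hAjopen j).measurableSet m

lemma measurable_jumpCount_of_open (ht : t ∈ Set.Icc 0 T) {A : Set H} (hAopen : IsOpen A)
    {δ : ℝ} (hδ0 : 0 < δ) (hδ : ∀ x ∈ A, δ ≤ ‖x‖) :
    @Measurable (CadlagSpace H T) ℕ (cylSigma H T) _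
      (fun F => {s ∈ Set.Ioc (0:ℝ) t | F.1 s - leftLim F.1 s ∈ A}.ncard) := by
  refine @measurable_to_countable' ℕ (CadlagSpace H T) _ _ (cylSigma H T) _ ?_
  intro n
  have heq : (fun F : CadlagSpace H T =>
        {s ∈ Set.Ioc (0:ℝ) t | F.1 s - leftLim F.1 s ∈ A}.ncard) ⁻¹' {n} =
      {F : CadlagSpace H T | n ≤ {s ∈ Set.Ioc (0:ℝ) t | F.1 s - leftLim F.1 s ∈ A}.ncard} \
      {F : CadlagSpace H T | n+1 ≤ {s ∈ Set.Ioc (0:ℝ) t | F.1 s - leftLim F.1 s ∈ A}.ncard} := by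
    ext F
    simp only [Set.mem_preimage, Set.mem_singleton_iff, Set.mem_diff, Set.mem_setOf_eq]
    omega
  rw [heq]
  exact (measurableSet_le_jumpCount_open ht hAopen hδ0 hδ n).diff
    (measurableSet_le_jumpCount_open ht hAopen hδ0 hδ (n+1))

end Count


section Dynkin

variable [MeasurableSpace H] [BorelSpace H] [SecondCountableTopology H]

lemma measurable_jumpCount_inter (ht : t ∈ Set.Icc 0 T) {ε : ℝ} (hε0 : 0 < ε) :
    ∀ ⦃B : Set H⦄, MeasurableSet B →
      @Measurable (CadlagSpace H T) ℕ (cylSigma H T) _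
        (fun F => {s ∈ Set.Ioc (0:ℝ) t |
          F.1 s - leftLim F.1 s ∈ B ∩ {x : H | ε/2 < ‖x‖}}.ncard) := by
  set S : Set H := {x : H | ε/2 < ‖x‖} with hS
  have hSopen : IsOpen S := isOpen_lt continuous_const continuous_norm
  have hSbd : ∀ x ∈ S, ε/2 ≤ ‖x‖ := fun x hx => le_of_lt hx
  have hε20 : (0:ℝ) < ε/2 := by positivity
  have hJSfin : ∀ F : CadlagSpace H T,
      {s ∈ Set.Ioc (0:ℝ) t | F.1 s - leftLim F.1 s ∈ S}.Finite := by
    intro F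
    refine (finite_bigJumps F.2 ht hε20).subset ?_
    intro s hs
    exact ⟨hs.1, hSbd _ hs.2⟩
  have h_eq : (inferInstance : MeasurableSpace H) = MeasurableSpace.generateFrom
      {U : Set H | IsOpen U} := BorelSpace.measurable_eq
  refine MeasurableSpace.induction_on_inter h_eq
    (fun U hU V hV _ => hU.inter hV) ?_ ?_ ?_ ?_
  · -- empty
    have : ∀ F : CadlagSpace H T,
        {s ∈ Set.Ioc (0:ℝ) t | F.1 s - leftLim F.1 s ∈ (∅ : Set H) ∩ S} = ∅ := by
      intro F; ext s; simp
    simp only [this, Set.ncard_empty]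
    exact measurable_const
  · -- open sets
    intro U hUopen
    exact measurable_jumpCount_of_open ht ((hUopen : IsOpen U).inter hSopen) hε20
      (fun x hx => hSbd x hx.2)
  · -- complement
    intro B hBmeas hB
    have hkey : ∀ F : CadlagSpace H T,
        {s ∈ Set.Ioc (0:ℝ) t | F.1 s - leftLim F.1 s ∈ Bᶜ ∩ S}.ncard =
        {s ∈ Set.Ioc (0:ℝ) t | F.1 s - leftLim F.1 s ∈ S}.ncard -
        {s ∈ Set.Ioc (0:ℝ) t | F.1 s - leftLim F.1 s ∈ B ∩ S}.ncard := by
      intro F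
      have hsub : {s ∈ Set.Ioc (0:ℝ) t | F.1 s - leftLim F.1 s ∈ B ∩ S} ⊆
          {s ∈ Set.Ioc (0:ℝ) t | F.1 s - leftLim F.1 s ∈ S} := fun s hs => ⟨hs.1, hs.2.2⟩
      have hdiff : {s ∈ Set.Ioc (0:ℝ) t | F.1 s - leftLim F.1 s ∈ Bᶜ ∩ S} =
          {s ∈ Set.Ioc (0:ℝ) t | F.1 s - leftLim F.1 s ∈ S} \
          {s ∈ Set.Ioc (0:ℝ) t | F.1 s - leftLim F.1 s ∈ B ∩ S} := by
        ext s
        simp only [Set.mem_setOf_eq, Set.mem_diff, Set.mem_inter_iff, Set.mem_compl_iff]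
        tauto
      rw [hdiff, Set.ncard_diff hsub ((hJSfin F).subset hsub)]
    simp only [hkey]
    exact (measurable_jumpCount_of_open ht hSopen hε20 hSbd).sub hB
  · -- disjoint unions
    intro g hgdisj hgmeas hgC
    set Jf : ℕ → CadlagSpace H T → Set ℝ := fun i F =>
      {s ∈ Set.Ioc (0:ℝ) t | F.1 s - leftLim F.1 s ∈ g i ∩ S} with hJf
    have hJfin : ∀ i F, (Jf i F).Finite :=
      fun i F => (hJSfin F).subset (fun s hs => ⟨hs.1, hs.2.2⟩)
    have hJdisj : ∀ F, ∀ i j : ℕ, i ≠ j → Disjoint (Jf i F) (Jf j F) := by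
      intro F i j hij
      rw [Set.disjoint_left]
      intro s hsi hsj
      exact Set.disjoint_left.1 (hgdisj hij) hsi.2.1 hsj.2.1
    have hsum : ∀ (F : CadlagSpace H T) (n : ℕ),
        {s ∈ Set.Ioc (0:ℝ) t |
          F.1 s - leftLim F.1 s ∈ (⋃ i ∈ Finset.range n, g i) ∩ S}.ncard =
        ∑ i ∈ Finset.range n, (Jf i F).ncard := by
      intro F n
      induction n with
      | zero =>
        simp only [Finset.range_zero, Finset.sum_empty]
        convert Set.ncard_empty ℝ
        ext s; simp
      | succ n ih =>
        have hsplit : {s ∈ Set.Ioc (0:ℝ) t |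
            F.1 s - leftLim F.1 s ∈ (⋃ i ∈ Finset.range (n+1), g i) ∩ S} =
            Jf n F ∪ {s ∈ Set.Ioc (0:ℝ) t |
              F.1 s - leftLim F.1 s ∈ (⋃ i ∈ Finset.range n, g i) ∩ S} := by
          ext s
          simp only [hJf, Set.mem_setOf_eq, Set.mem_union, Set.mem_inter_iff, Set.mem_iUnion,
            Finset.mem_range]
          constructor
          · rintro ⟨hs1, ⟨i, hi, hgi⟩, hs3⟩
            rcases Nat.lt_succ_iff_lt_or_eq.1 hi with hi' | rfl
            · exact Or.inr ⟨hs1, ⟨i, hi', hgi⟩, hs3⟩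
            · exact Or.inl ⟨hs1, hgi, hs3⟩
          · rintro (⟨hs1, hgi, hs3⟩ | ⟨hs1, ⟨i, hi, hgi⟩, hs3⟩)
            · exact ⟨hs1, ⟨n, Nat.lt_succ_self n, hgi⟩, hs3⟩
            · exact ⟨hs1, ⟨i, hi.trans (Nat.lt_succ_self n), hgi⟩, hs3⟩
        have hdisj2 : Disjoint (Jf n F) {s ∈ Set.Ioc (0:ℝ) t |
            F.1 s - leftLim F.1 s ∈ (⋃ i ∈ Finset.range n, g i) ∩ S} := by
          rw [Set.disjoint_left]
          rintro s hsn ⟨hs1, hmem, hs3⟩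
          obtain ⟨i, hi, hgi⟩ := Set.mem_iUnion₂.1 hmem
          exact Set.disjoint_left.1
            (hgdisj (Nat.ne_of_lt (Finset.mem_range.1 hi))) hgi hsn.2.1
        rw [hsplit, Set.ncard_union_eq hdisj2 (hJfin n F)
          ((hJSfin F).subset (fun s hs => ⟨hs.1, hs.2.2⟩)),
          Finset.sum_range_succ, ih]
        ring
    -- measurability of each partial count
    have hpartial : ∀ n : ℕ, @Measurable (CadlagSpace H T) ℕ (cylSigma H T) _
        (fun F => {s ∈ Set.Ioc (0:ℝ) t |
          F.1 s - leftLim F.1 s ∈ (⋃ i ∈ Finset.range n, g i) ∩ S}.ncard) := by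
      intro n
      simp only [hsum]
      exact Finset.measurable_sum (Finset.range n) (fun i _ => hgC i)
    -- the ≤-sets characterisation
    set N : CadlagSpace H T → ℕ := fun F =>
      {s ∈ Set.Ioc (0:ℝ) t | F.1 s - leftLim F.1 s ∈ (⋃ i, g i) ∩ S}.ncard with hN
    set P : ℕ → CadlagSpace H T → ℕ := fun n F =>
      {s ∈ Set.Ioc (0:ℝ) t |
        F.1 s - leftLim F.1 s ∈ (⋃ i ∈ Finset.range n, g i) ∩ S}.ncard with hP
    have hNfin : ∀ F : CadlagSpace H T,
        {s ∈ Set.Ioc (0:ℝ) t | F.1 s - leftLim F.1 s ∈ (⋃ i, g i) ∩ S}.Finite :=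
      fun F => (hJSfin F).subset (fun s hs => ⟨hs.1, hs.2.2⟩)
    have hNle : ∀ (F : CadlagSpace H T) (m : ℕ), N F ≤ m ↔ ∀ n, P n F ≤ m := by
      intro F m
      constructor
      · intro h n
        refine le_trans (Set.ncard_le_ncard ?_ (hNfin F)) h
        intro s hs
        obtain ⟨i, -, hgi⟩ := Set.mem_iUnion₂.1 hs.2.1
        exact ⟨hs.1, Set.mem_iUnion.2 ⟨i, hgi⟩, hs.2.2⟩
      · intro h
        by_contra hcon
        push_neg at hcon
        classical
        set JU := {s ∈ Set.Ioc (0:ℝ) t | F.1 s - leftLim F.1 s ∈ (⋃ i, g i) ∩ S} with hJU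
        have hJUfin : JU.Finite := hNfin F
        set idx : ℝ → ℕ := fun s =>
          if h' : ∃ i, F.1 s - leftLim F.1 s ∈ g i then h'.choose else 0 with hidx
        set nn : ℕ := hJUfin.toFinset.sup idx + 1 with hnn
        have hsub : JU ⊆ {s ∈ Set.Ioc (0:ℝ) t |
            F.1 s - leftLim F.1 s ∈ (⋃ i ∈ Finset.range nn, g i) ∩ S} := by
          intro s hs
          have hex : ∃ i, F.1 s - leftLim F.1 s ∈ g i := Set.mem_iUnion.1 hs.2.1
          have hch : F.1 s - leftLim F.1 s ∈ g (idx s) := by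
            rw [hidx]; simp only [hex, dif_pos]; exact hex.choose_spec
          have hlt : idx s < nn := by
            rw [hnn]
            exact Nat.lt_succ_of_le (Finset.le_sup (hJUfin.mem_toFinset.2 hs))
          exact ⟨hs.1, Set.mem_iUnion₂.2 ⟨idx s, Finset.mem_range.2 hlt, hch⟩, hs.2.2⟩
        have : N F ≤ P nn F := by
          refine Set.ncard_le_ncard hsub ?_
          exact (hJSfin F).subset (fun s hs => ⟨hs.1, hs.2.2⟩)
        exact absurd (le_trans this (h nn)) (not_le.2 hcon)
    have hle : ∀ m : ℕ, MeasurableSet[cylSigma H T] {F | N F ≤ m} := by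
      intro m
      have heq : {F : CadlagSpace H T | N F ≤ m} = ⋂ n, {F | P n F ≤ m} := by
        ext F
        simp only [Set.mem_setOf_eq, Set.mem_iInter]
        exact hNle F m
      rw [heq]
      refine MeasurableSet.iInter fun n => ?_
      exact hpartial n (show MeasurableSet {k : ℕ | k ≤ m} from trivial)
    refine @measurable_to_countable' ℕ (CadlagSpace H T) _ _ (cylSigma H T) _ ?_
    intro n
    match n with
    | 0 =>
      have heq : (N ⁻¹' {0}) = {F | N F ≤ 0} := by
        ext F; simp [Nat.le_zero]
      exact heq ▸ hle 0
    | (n+1) =>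
      have heq : (N ⁻¹' {n+1}) = {F | N F ≤ n+1} \ {F | N F ≤ n} := by
        ext F
        simp only [Set.mem_preimage, Set.mem_singleton_iff, Set.mem_diff, Set.mem_setOf_eq]
        omega
      exact heq ▸ (hle (n+1)).diff (hle n)

end Dynkin

end JumpProof

theorem measurable_jumpCount
    {H : Type*} [NormedAddCommGroup H] [InnerProductSpace ℝ H] [CompleteSpace H]
    [SecondCountableTopology H] [MeasurableSpace H] [BorelSpace H]
    (T : ℝ) (hT : 0 < T) (t : ℝ) (ht : t ∈ Set.Icc (0 : ℝ) T)
    (E : Set H) (hE : MeasurableSet E) (hEbdd : ∃ ε > (0 : ℝ), ∀ x ∈ E, ε ≤ ‖x‖) :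
    @Measurable (CadlagSpace H T) ℕ (cylSigma H T) _ (fun f => jumpCount E f.1 t) := by
  obtain ⟨ε, hε0, hEbd⟩ := hEbdd
  have hES : E ∩ {x : H | ε/2 < ‖x‖} = E := by
    apply Set.inter_eq_left.2
    intro x hx
    have := hEbd x hx
    have hx0 : 0 < ‖x‖ := by linarith
    simp only [Set.mem_setOf_eq]
    linarith
  have h := JumpProof.measurable_jumpCount_inter (T := T) ht hε0 hE
  simp only [hES] at h
  simpa [jumpCount] using h
end
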